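/- Let q be a prime power, f : F_q^k → F_q^ℓ a linear map, and d_d ≤ d_f positive integers. Let C : F_q^k → F_q^n be an injective linear map in systematic form (the first k coordinates of C(u) equal u) whose image has Hamming weight at least d_d on every nonzero vector, and let D : F_q^ℓ → F_q^{r'} be an injective linear map whose image has Hamming weight at least d_f − d_d on every nonzero vector. Then C_cat = {(C(u), D(f(u))) : u ∈ F_q^k} is a k-dimensional linear subspace of F_q^{n+r'} satisfying: d(x, y) ≥ d_d for all distinct x, y ∈ C_cat, and d((C(u_1), D(f(u_1))), (C(u_2), D(f(u_2)))) ≥ d_f whenever f(u_1) ≠ f(u_2). In particular, u ↦ (C(u), D(f(u))) is a linear (f : d_d, d_f)-FCC of dimension k with total redundancy (n − k) + r'. -/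

import Mathlib

lemma append_sub' {F : Type*} [Ring F] {n m : ℕ} (a c : Fin n → F) (b d : Fin m → F) :
    Fin.append a b - Fin.append c d = Fin.append (a - c) (b - d) := by
  funext i
  refine Fin.addCases (fun i => ?_) (fun i => ?_) i <;>
    simp [Fin.append_left, Fin.append_right]

lemma append_add' {F : Type*} [Ring F] {n m : ℕ} (a c : Fin n → F) (b d : Fin m → F) :
    Fin.append a b + Fin.append c d = Fin.append (a + c) (b + d) := by
  funext i
  refine Fin.addCases (fun i => ?_) (fun i => ?_) i <;>
    simp [Fin.append_left, Fin.append_right]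

lemma append_smul' {F : Type*} [Ring F] {n m : ℕ} (s : F) (a : Fin n → F) (b : Fin m → F) :
    s • Fin.append a b = Fin.append (s • a) (s • b) := by
  funext i
  refine Fin.addCases (fun i => ?_) (fun i => ?_) i <;>
    simp [Fin.append_left, Fin.append_right]

lemma hammingNorm_append' {F : Type*} [DecidableEq F] [Zero F] {n m : ℕ}
    (a : Fin n → F) (b : Fin m → F) :
    hammingNorm (Fin.append a b) = hammingNorm a + hammingNorm b := by
  simp only [hammingNorm, Finset.card_filter]
  rw [Fin.sum_univ_add]
  simp [Fin.append_left, Fin.append_right]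



/-- Concatenation of a systematic `[n, k]` linear code of minimum weight
`d_d` with a `[r', ℓ]` linear code of minimum weight `d_f − d_d` applied to a linear function
`f` yields a `k`-dimensional linear `(f : d_d, d_f)`-FCC in `F_q^{n+r'}`. -/
theorem linear_concatenation_is_FCC
    {F : Type*} [Field F] [Fintype F] [DecidableEq F]
    {k l n r' : ℕ} (hkn : k ≤ n) (dd df : ℕ) (hdd : 1 ≤ dd) (hddf : dd ≤ df)
    (f : (Fin k → F) →ₗ[F] (Fin l → F))
    (C : (Fin k → F) →ₗ[F] (Fin n → F)) (hCinj : Function.Injective C)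
    (hCsys : ∀ (u : Fin k → F) (i : Fin k), C u (Fin.castLE hkn i) = u i)
    (hCwt : ∀ u : Fin k → F, u ≠ 0 → dd ≤ hammingNorm (C u))
    (D : (Fin l → F) →ₗ[F] (Fin r' → F)) (hDinj : Function.Injective D)
    (hDwt : ∀ w : Fin l → F, w ≠ 0 → df - dd ≤ hammingNorm (D w)) :
    (∃ W : Submodule F (Fin (n + r') → F),
        (W : Set (Fin (n + r') → F)) =
          Set.range (fun u : Fin k → F => Fin.append (C u) (D (f u))) ∧
        Module.finrank F W = k) ∧
    (∀ u v : Fin k → F, u ≠ v →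
        dd ≤ hammingDist (Fin.append (C u) (D (f u))) (Fin.append (C v) (D (f v)))) ∧
    (∀ u v : Fin k → F, f u ≠ f v →
        df ≤ hammingDist (Fin.append (C u) (D (f u))) (Fin.append (C v) (D (f v)))) := by
  have key : ∀ u v : Fin k → F,
      hammingDist (Fin.append (C u) (D (f u))) (Fin.append (C v) (D (f v))) =
      hammingNorm (C (u - v)) + hammingNorm (D (f (u - v))) := by
    intro u v
    rw [hammingDist_comm, hammingDist_eq_hammingNorm, neg_add_eq_sub, append_sub', hammingNorm_append', map_sub, map_sub, map_sub]
  refine ⟨?_, ?_, ?_⟩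
  · set L : (Fin k → F) →ₗ[F] (Fin (n + r') → F) :=
      { toFun := fun u => Fin.append (C u) (D (f u))
        map_add' := by intro u v; rw [append_add']; simp
        map_smul' := by intro s u; rw [append_smul']; simp } with hL
    have hLinj : Function.Injective L := by
      intro u v h
      apply hCinj
      funext i
      have := congrFun h (Fin.castAdd r' i)
      simpa [hL, Fin.append_left] using this
    refine ⟨LinearMap.range L, ?_, ?_⟩
    · ext x; simp [hL, LinearMap.mem_range, Set.mem_range]
    · rw [LinearMap.finrank_range_of_inj hLinj]
      simp [Module.finrank_pi]
  · intro u v huv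
    rw [key]
    calc dd ≤ hammingNorm (C (u - v)) := hCwt _ (sub_ne_zero_of_ne huv)
      _ ≤ _ := Nat.le_add_right _ _
  · intro u v huv
    have hfv : f (u - v) ≠ 0 := by rw [map_sub]; exact sub_ne_zero_of_ne huv
    have huv' : u ≠ v := fun h => huv (by rw [h])
    rw [key]
    have h1 := hCwt _ (sub_ne_zero_of_ne huv')
    have h2 := hDwt _ hfv
    omega
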